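/- arXiv:1911.13054 — 2 statements merged into one kernel-verified Lean document; each statement's English description precedes it below -/
import Mathlib

section
/- Let x, y be finite words over Σ with xy ≠ yx and let k, l ≥ 1. Then lcs(x y^l, y x^k) = lcs(xy, yx). -/
variable {α : Type*} [DecidableEq α]

/-- Longest common prefix of two finite words. -/
def lcp : List α → List α → List α
  | a :: u, b :: v => if a = b then a :: lcp u v else []
  | _, _ => []

/-- Longest common suffix of two finite words. -/
def lcs (u v : List α) : List α := (lcp u.reverse v.reverse).reverse

/-- `wpow x k` is the `k`-fold concatenation `x^k`. -/
def wpow (x : List α) (k : ℕ) : List α := (List.replicate k x).flatten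

lemma wpow_succ (x : List α) (k : ℕ) : wpow x (k+1) = x ++ wpow x k := by
  simp [wpow, List.replicate_succ]

lemma wpow_length (x : List α) (k : ℕ) : (wpow x k).length = k * x.length := by
  induction k with
  | zero => simp [wpow]
  | succ k ih => rw [wpow_succ]; simp [ih]; ring

lemma wpow_comm (x : List α) (k : ℕ) : wpow x k ++ x = x ++ wpow x k := by
  induction k with
  | zero => simp [wpow]
  | succ k ih => rw [wpow_succ, List.append_assoc, ih]

lemma wpow_reverse (x : List α) (k : ℕ) : (wpow x k).reverse = wpow x.reverse k := by
  induction k with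
  | zero => simp [wpow]
  | succ k ih => rw [wpow_succ, List.reverse_append, ih, wpow_succ, ← wpow_comm]

lemma wpow_getElem? (x : List α) (k i : ℕ) (hi : i < k * x.length) :
    (wpow x k)[i]? = x[i % x.length]? := by
  induction k generalizing i with
  | zero => omega
  | succ k ih =>
    rw [wpow_succ]
    by_cases h : i < x.length
    · rw [List.getElem?_append_left h, Nat.mod_eq_of_lt h]
    · push_neg at h
      have hlt : i - x.length < k * x.length := by
        have : (k+1) * x.length = k * x.length + x.length := by ring
        omega
      rw [List.getElem?_append_right h, ih _ hlt]
      congr 1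
      conv_rhs => rw [show i = (i - x.length) + x.length from by omega]
      rw [Nat.add_mod_right]

/-- Characterization of `lcp`: agreement below `n`, disagreement at `n`. -/
lemma lcp_spec : ∀ (n : ℕ) (u v : List α),
    (∀ i < n, u[i]? = v[i]?) → u[n]? ≠ v[n]? → lcp u v = u.take n := by
  intro n
  induction n with
  | zero =>
    intro u v _ hne
    match u, v with
    | [], [] => simp at hne
    | [], b :: v => simp [lcp]
    | a :: u, [] => simp [lcp]
    | a :: u, b :: v =>
      have hab : a ≠ b := by simpa using hne
      simp [lcp, hab]
  | succ n ih =>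
    intro u v hagree hne
    match u, v with
    | [], [] => simp at hne
    | [], b :: v => have := hagree 0 (Nat.succ_pos n); simp at this
    | a :: u, [] => have := hagree 0 (Nat.succ_pos n); simp at this
    | a :: u, b :: v =>
      have hab : a = b := by have := hagree 0 (Nat.succ_pos n); simpa using this
      have h1 : ∀ i < n, u[i]? = v[i]? := by
        intro i hi
        have := hagree (i+1) (by omega)
        simpa using this
      have h2 : u[n]? ≠ v[n]? := by simpa using hne
      simp [lcp, hab, List.take_succ_cons, ih u v h1 h2]

/-- Key computation: `(a^k ++ b)[i]? = a[i % |a|]?`, given agreement of the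
periodic sequences below `i`. -/
lemma key_getElem? (a b : List α) (ha : a ≠ []) (k : ℕ) (hk : 1 ≤ k) (i : ℕ)
    (hi : i < k * a.length + b.length)
    (hagree : ∀ j < i, a[j % a.length]? = b[j % b.length]?) :
    (wpow a k ++ b)[i]? = a[i % a.length]? := by
  have hna : 0 < a.length := List.length_pos_iff.mpr ha
  by_cases hcase : i < k * a.length
  · rw [List.getElem?_append_left (by rw [wpow_length]; exact hcase)]
    exact wpow_getElem? a k i hcase
  · push_neg at hcase
    rw [List.getElem?_append_right (by rw [wpow_length]; exact hcase), wpow_length]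
    have hj : i - k * a.length < b.length := by omega
    have hji : i - k * a.length < i := by
      have : a.length ≤ k * a.length := Nat.le_mul_of_pos_left _ hk
      omega
    have h1 : a[(i - k * a.length) % a.length]? = b[(i - k * a.length) % b.length]? :=
      hagree _ hji
    have h2 : (i - k * a.length) % a.length = i % a.length := by
      conv_rhs => rw [show i = (i - k * a.length) + k * a.length from by omega]
      rw [Nat.add_mul_mod_self_right]
    rw [Nat.mod_eq_of_lt hj] at h1
    rw [← h1, h2]

/-- Core lemma in lcp form. -/
lemma lcp_core (a b : List α) (hab : a ++ b ≠ b ++ a)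
    (k l : ℕ) (hk : 1 ≤ k) (hl : 1 ≤ l) :
    lcp (wpow a k ++ b) (wpow b l ++ a) = lcp (a ++ b) (b ++ a) := by
  have ha : a ≠ [] := by rintro rfl; simp at hab
  have hb : b ≠ [] := by rintro rfl; simp at hab
  have hna : 0 < a.length := List.length_pos_iff.mpr ha
  have hnb : 0 < b.length := List.length_pos_iff.mpr hb
  have hone : ∀ (c : List α), wpow c 1 = c := by
    intro c; simp [wpow]
  -- there is a position below |a|+|b| where the periodic sequences differ
  have hW : ∃ i, i < a.length + b.length ∧ a[i % a.length]? ≠ b[i % b.length]? := by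
    by_contra hcon
    push_neg at hcon
    apply hab
    apply List.ext_getElem?
    intro i
    by_cases hi : i < a.length + b.length
    · have agree : ∀ j < i, a[j % a.length]? = b[j % b.length]? := by
        intro j hj; exact hcon j (by omega)
      have e1 : (a ++ b)[i]? = a[i % a.length]? := by
        have := key_getElem? a b ha 1 le_rfl i (by simpa using hi) agree
        simpa [hone] using this
      have e2 : (b ++ a)[i]? = b[i % b.length]? := by
        have := key_getElem? b a hb 1 le_rfl i (by simp; omega) (fun j hj => (agree j hj).symm)
        simpa [hone] using this
      rw [e1, e2, hcon i hi]
    · rw [List.getElem?_eq_none (by simp; omega), List.getElem?_eq_none (by simp; omega)]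
  obtain ⟨w, hw, hwne⟩ := hW
  have hE : ∃ i, a[i % a.length]? ≠ b[i % b.length]? := ⟨w, hwne⟩
  set n := Nat.find hE with hn
  have hnw : n < a.length + b.length := lt_of_le_of_lt (Nat.find_min' hE hwne) hw
  have hagree : ∀ j < n, a[j % a.length]? = b[j % b.length]? := by
    intro j hj
    have := Nat.find_min hE hj
    simpa using this
  have hne : a[n % a.length]? ≠ b[n % b.length]? := Nat.find_spec hE
  -- compute both lcp's
  have eA : ∀ (m : ℕ), 1 ≤ m → ∀ i ≤ n, (wpow a m ++ b)[i]? = a[i % a.length]? := by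
    intro m hm i hi
    exact key_getElem? a b ha m hm i
      (by have : a.length ≤ m * a.length := Nat.le_mul_of_pos_left _ hm; omega)
      (fun j hj => hagree j (by omega))
  have eB : ∀ (m : ℕ), 1 ≤ m → ∀ i ≤ n, (wpow b m ++ a)[i]? = b[i % b.length]? := by
    intro m hm i hi
    exact key_getElem? b a hb m hm i
      (by have : b.length ≤ m * b.length := Nat.le_mul_of_pos_left _ hm; omega)
      (fun j hj => (hagree j (by omega)).symm)
  have step : ∀ (m m' : ℕ), 1 ≤ m → 1 ≤ m' →
      lcp (wpow a m ++ b) (wpow b m' ++ a) = (wpow a m ++ b).take n := by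
    intro m m' hm hm'
    apply lcp_spec
    · intro i hi
      rw [eA m hm i (by omega), eB m' hm' i (by omega)]
      exact hagree i hi
    · rw [eA m hm n le_rfl, eB m' hm' n le_rfl]
      exact hne
  have t1 := step k l hk hl
  have t2 := step 1 1 le_rfl le_rfl
  rw [hone, hone] at t2
  rw [t1, t2]
  -- the two takes agree
  apply List.ext_getElem?
  intro i
  rw [List.getElem?_take, List.getElem?_take]
  by_cases hi : i < n
  · rw [if_pos hi, if_pos hi, eA k hk i (by omega)]
    have := eA 1 le_rfl i (by omega)
    rw [hone] at this
    rw [this]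
  · rw [if_neg hi, if_neg hi]

theorem lcs_pow_noncomm (x y : List α) (h : x ++ y ≠ y ++ x)
    (k l : ℕ) (hk : 1 ≤ k) (hl : 1 ≤ l) :
    lcs (x ++ wpow y l) (y ++ wpow x k) = lcs (x ++ y) (y ++ x) := by
  have h' : y.reverse ++ x.reverse ≠ x.reverse ++ y.reverse := by
    intro he
    apply h
    have : (x ++ y).reverse = (y ++ x).reverse := by
      rw [List.reverse_append, List.reverse_append, he]
    exact List.reverse_injective this
  unfold lcs
  rw [List.reverse_append, List.reverse_append, List.reverse_append, List.reverse_append,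
    wpow_reverse, wpow_reverse]
  rw [lcp_core y.reverse x.reverse h' l k hl hk]
end

section
/- Fine and Wilf bound for the left-periodic case: if x and y are finite words with xy ≠ yx, then the longest common suffix of x^m and y^n (for all m, n large enough, equivalently lcs(xy, yx)) has length strictly less than |x| + |y| − gcd(|x|, |y|). -/
variable {α : Type*} [DecidableEq α]

theorem lcp_prefix_left (u : List α) : ∀ v : List α, lcp u v <+: u := by
  induction u with
  | nil => intro v; cases v <;> simp [lcp]
  | cons a u ih =>
    intro v
    cases v with
    | nil => simp [lcp]
    | cons b v =>
      by_cases hab : a = b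
      · simpa [lcp, hab] using ih v
      · simp [lcp, hab]

theorem lcp_prefix_right (u : List α) : ∀ v : List α, lcp u v <+: v := by
  induction u with
  | nil => intro v; cases v <;> simp [lcp]
  | cons a u ih =>
    intro v
    cases v with
    | nil => simp [lcp]
    | cons b v =>
      by_cases hab : a = b
      · simpa [lcp, hab] using ih v
      · simp [lcp, hab]

theorem lcs_suffix_left (u v : List α) : lcs u v <:+ u := by
  simpa [lcs] using List.reverse_suffix.mpr (lcp_prefix_left u.reverse v.reverse)

theorem lcs_suffix_right (u v : List α) : lcs u v <:+ v := by
  simpa [lcs] using List.reverse_suffix.mpr (lcp_prefix_right u.reverse v.reverse)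

theorem fw_aux : ∀ (n : ℕ) (x y w : List α), x.length + y.length ≤ n →
    w <:+ x ++ y → w <:+ y ++ x →
    x.length + y.length ≤ w.length + Nat.gcd x.length y.length → x ++ y = y ++ x := by
  intro n
  induction n with
  | zero =>
    intro x y w hn _ _ _
    have hx : x = [] := List.length_eq_zero_iff.mp (by omega)
    have hy : y = [] := List.length_eq_zero_iff.mp (by omega)
    simp [hx, hy]
  | succ n ih =>
    intro x y w hn h1 h2 hlen
    have key : ∀ x y w : List α, x.length ≤ y.length → x.length + y.length ≤ n + 1 →
        w <:+ x ++ y → w <:+ y ++ x →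
        x.length + y.length ≤ w.length + Nat.gcd x.length y.length → x ++ y = y ++ x := by
      intro x y w hle hn h1 h2 hlen
      rcases eq_or_ne x [] with rfl | hx
      · simp
      have hxpos : 0 < x.length := List.length_pos_iff.mpr hx
      have hg : Nat.gcd x.length y.length ≤ x.length :=
        Nat.le_of_dvd hxpos (Nat.gcd_dvd_left _ _)
      have hwy : y.length ≤ w.length := by omega
      have hwx : x.length ≤ w.length := le_trans hle hwy
      have hxw : x <:+ w :=
        List.suffix_of_suffix_length_le (List.suffix_append y x) h2 hwx
      have hyw : y <:+ w :=
        List.suffix_of_suffix_length_le (List.suffix_append x y) h1 hwy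
      have hxy : x <:+ y := List.suffix_of_suffix_length_le hxw hyw hle
      obtain ⟨u, hu⟩ := hxy
      obtain ⟨t, ht⟩ := hxw
      obtain ⟨p, hp⟩ := h1
      obtain ⟨q, hq⟩ := h2
      have h1' : t <:+ x ++ u := by
        refine ⟨p, List.append_cancel_right (bs := x) ?_⟩
        rw [List.append_assoc, ht, hp, ← hu, List.append_assoc]
      have h2' : t <:+ u ++ x := by
        refine ⟨q, List.append_cancel_right (bs := x) ?_⟩
        rw [List.append_assoc, ht, hq, ← hu]
      have hyl : y.length = u.length + x.length := by rw [← hu]; simp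
      have hwl : w.length = t.length + x.length := by rw [← ht]; simp
      have hg' : Nat.gcd x.length y.length = Nat.gcd x.length u.length := by
        rw [hyl, Nat.gcd_add_self_right]
      have hlen' : x.length + u.length ≤ t.length + Nat.gcd x.length u.length := by omega
      have hcomm : x ++ u = u ++ x := ih x u t (by omega) h1' h2' hlen'
      rw [← hu, ← List.append_assoc, hcomm, List.append_assoc]
    rcases Nat.le_total x.length y.length with hle | hle
    · exact key x y w hle hn h1 h2 hlen
    · exact (key y x w hle (by omega) h2 h1 (by rw [Nat.gcd_comm]; omega)).symm

theorem fine_wilf_lcs (x y : List α) (h : x ++ y ≠ y ++ x) :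
    (lcs (x ++ y) (y ++ x)).length + Nat.gcd x.length y.length <
      x.length + y.length := by
  by_contra h'
  exact h (fw_aux (x.length + y.length) x y (lcs (x ++ y) (y ++ x)) le_rfl
    (lcs_suffix_left _ _) (lcs_suffix_right _ _) (by omega))
end
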